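/- arXiv:2508.13749 — 4 statements merged into one kernel-verified Lean document; each statement's English description precedes it below -/
import Mathlib

section
/- The Efron–Stein inequality: if X₁,…,Xₙ are independent random variables, X₁',…,Xₙ' are independent copies, f is square-integrable, and f^{(i)} = f(X₁,…,X_{i−1},X_i',X_{i+1},…,Xₙ), then Var(f(X₁,…,Xₙ)) ≤ (1/2)·Σ_{i=1}^n E[(f − f^{(i)})²]. -/
open MeasureTheory ProbabilityTheory

open Function Set

namespace ES

variable {α β : Type*} {mα : MeasurableSpace α} {mβ : MeasurableSpace β}

lemma sq_integral_le {m : Measure α} [IsProbabilityMeasure m] {g : α → ℝ}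
    (hg : MemLp g 2 m) : (∫ a, g a ∂m) ^ 2 ≤ ∫ a, g a ^ 2 ∂m := by
  have h := variance_nonneg g m
  rw [variance_eq_sub hg] at h
  simp only [Pi.pow_apply] at h
  linarith

lemma mp_fst (μ : Measure α) (ν : Measure β) [IsProbabilityMeasure ν] [SFinite μ] :
    MeasurePreserving Prod.fst (μ.prod ν) μ :=
  ⟨measurable_fst, by simp⟩

lemma mp_snd (μ : Measure α) (ν : Measure β) [IsProbabilityMeasure μ] [SFinite ν] :
    MeasurePreserving Prod.snd (μ.prod ν) ν :=
  ⟨measurable_snd, by simp⟩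

lemma memℒp_sub_sq_integrable {m : Measure α} {g1 g2 : α → ℝ}
    (h1 : MemLp g1 2 m) (h2 : MemLp g2 2 m) :
    Integrable (fun x => (g1 x - g2 x) ^ 2) m := by
  simpa [Pi.sub_apply] using (h1.sub h2).integrable_sq

lemma variance_eq_half_integral {m : Measure α} [IsProbabilityMeasure m] {g : α → ℝ}
    (hg : MemLp g 2 m) :
    variance g m = (1/2) * ∫ p, (g p.1 - g p.2) ^ 2 ∂(m.prod m) := by
  have h1 : Integrable g m := hg.integrable one_le_two
  have h2 : Integrable (fun a => g a ^ 2) m := hg.integrable_sq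
  have i1 : Integrable (fun p : α × α => g p.1 ^ 2) (m.prod m) := by
    simpa [Function.comp_def] using
      ((mp_fst m m).integrable_comp h2.aestronglyMeasurable).mpr h2
  have i2 : Integrable (fun p : α × α => g p.2 ^ 2) (m.prod m) := by
    simpa [Function.comp_def] using
      ((mp_snd m m).integrable_comp h2.aestronglyMeasurable).mpr h2
  have i3 : Integrable (fun p : α × α => g p.1 * g p.2) (m.prod m) := h1.mul_prod h1
  have key : (fun p : α × α => (g p.1 - g p.2) ^ 2)
      = fun p => g p.1 ^ 2 - 2 * (g p.1 * g p.2) + g p.2 ^ 2 := by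
    funext p; ring
  have eA : ∫ p, g p.1 ^ 2 ∂(m.prod m) = ∫ a, g a ^ 2 ∂m := by
    rw [integral_prod _ i1]; simp
  have eB : ∫ p, g p.2 ^ 2 ∂(m.prod m) = ∫ a, g a ^ 2 ∂m := by
    rw [integral_prod _ i2]; simp
  have eC : ∫ p, g p.1 * g p.2 ∂(m.prod m) = (∫ a, g a ∂m) * ∫ a, g a ∂m :=
    integral_prod_mul g g
  have i12 : Integrable (fun p : α × α => g p.1 ^ 2 - 2 * (g p.1 * g p.2)) (m.prod m) :=
    i1.sub (i3.const_mul 2)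
  rw [key, integral_add i12 i2, integral_sub i1 (i3.const_mul 2), integral_const_mul _ _,
    eA, eB, eC, variance_eq_sub hg]
  simp only [Pi.pow_apply]
  ring

lemma insertNth_update {k : ℕ} {β : Type*} (p : Fin (k + 1)) (a : β) (w : Fin k → β)
    (i : Fin k) (y : β) :
    p.insertNth a (update w i y)
      = update (p.insertNth a w : Fin (k + 1) → β) (p.succAbove i) y := by
  refine Fin.succAboveCases p ?_ ?_ |> funext
  · rw [update_of_ne (Fin.succAbove_ne p i).symm, Fin.insertNth_apply_same,
      Fin.insertNth_apply_same]
  · intro j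
    by_cases hj : j = i
    · subst hj
      rw [Fin.insertNth_apply_succAbove, update_self, update_self]
    · rw [Fin.insertNth_apply_succAbove,
        update_of_ne (fun hc => hj (Fin.succAbove_right_injective hc)),
        update_of_ne hj, Fin.insertNth_apply_succAbove]

lemma measurePreserving_update {𝒳 : Type*} [MeasurableSpace 𝒳] {k : ℕ}
    (ν : Fin (k + 1) → Measure 𝒳) [∀ i, IsProbabilityMeasure (ν i)] (i : Fin (k + 1)) :
    MeasurePreserving (fun p : (Fin (k + 1) → 𝒳) × 𝒳 => Function.update p.1 i p.2)
      ((Measure.pi ν).prod (ν i)) (Measure.pi ν) := by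
  set ν' : Fin k → Measure 𝒳 := fun j => ν (i.succAbove j) with hν'
  set e := MeasurableEquiv.piFinSuccAbove (fun _ : Fin (k + 1) => 𝒳) i with he
  have mpe : MeasurePreserving e (Measure.pi ν) ((ν i).prod (Measure.pi ν')) :=
    measurePreserving_piFinSuccAbove ν i
  have m1 : MeasurePreserving (Prod.map e id)
      ((Measure.pi ν).prod (ν i)) (((ν i).prod (Measure.pi ν')).prod (ν i)) :=
    mpe.prod (MeasurePreserving.id _)
  have m2 : MeasurePreserving Prod.swap
      ((((ν i).prod (Measure.pi ν'))).prod (ν i)) ((ν i).prod ((ν i).prod (Measure.pi ν'))) :=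
    Measure.measurePreserving_swap
  have m3 : MeasurePreserving (Prod.map id Prod.snd)
      ((ν i).prod ((ν i).prod (Measure.pi ν'))) ((ν i).prod (Measure.pi ν')) :=
    (MeasurePreserving.id _).prod (mp_snd _ _)
  have m4 : MeasurePreserving e.symm ((ν i).prod (Measure.pi ν')) (Measure.pi ν) :=
    mpe.symm e
  have hfun : (fun p : (Fin (k + 1) → 𝒳) × 𝒳 => Function.update p.1 i p.2)
      = e.symm ∘ Prod.map id Prod.snd ∘ Prod.swap ∘ Prod.map e id := by
    funext p
    simp only [Function.comp_apply, Prod.map_apply, id_eq, Prod.swap_prod_mk,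
      MeasurableEquiv.piFinSuccAbove_apply, MeasurableEquiv.piFinSuccAbove_symm_apply]
    exact (Fin.insertNth_removeNth i p.2 p.1).symm
  rw [hfun]
  exact m4.comp (m3.comp (m2.comp m1))

lemma map_pi_eq {ι : Type*} [Fintype ι] {Ω : Type*} [MeasurableSpace Ω] {μ : Measure Ω}
    [IsProbabilityMeasure μ] {κ : ι → Type*} [mκ : ∀ i, MeasurableSpace (κ i)]
    {Y : ∀ i, Ω → κ i} (hY : ∀ i, Measurable (Y i))
    (h : iIndepFun Y μ) :
    Measure.map (fun ω i => Y i ω) μ = Measure.pi (fun i => Measure.map (Y i) μ) := by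
  haveI : ∀ i, IsProbabilityMeasure (Measure.map (Y i) μ) :=
    fun i => Measure.isProbabilityMeasure_map (hY i).aemeasurable
  refine (Measure.pi_eq fun s hs => ?_).symm
  rw [Measure.map_apply (measurable_pi_lambda _ fun i => hY i) (MeasurableSet.univ_pi hs)]
  have hpre : (fun ω i => Y i ω) ⁻¹' (Set.pi Set.univ s) = ⋂ i, Y i ⁻¹' s i := by
    ext ω; simp [Set.mem_univ_pi]
  rw [hpre, h.meas_iInter fun i => ⟨s i, hs i, rfl⟩]
  exact Finset.prod_congr rfl fun i _ => (Measure.map_apply (hY i) (hs i)).symm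

lemma map_eval_pi {ι : Type*} [Fintype ι] {κ : ι → Type*} [∀ i, MeasurableSpace (κ i)]
    [DecidableEq ι] (μ : ∀ i, Measure (κ i)) [∀ i, IsProbabilityMeasure (μ i)] (i : ι) :
    Measure.map (Function.eval i) (Measure.pi μ) = μ i := by
  ext t ht
  rw [Measure.map_apply (measurable_pi_apply i) ht]
  have hpre : Function.eval i ⁻¹' t
      = Set.pi Set.univ (Function.update (fun _ => Set.univ) i t) := by
    ext x
    simp only [Set.mem_preimage, Set.mem_univ_pi]
    constructor
    · intro hx j
      rcases eq_or_ne j i with rfl | hj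
      · simpa [Function.update_self] using hx
      · simp [Function.update_of_ne hj]
    · intro hx
      have := hx i
      simpa [Function.update_self] using this
  rw [hpre, Measure.pi_pi]
  rw [Finset.prod_eq_single_of_mem i (Finset.mem_univ i)
    (fun j _ hj => by simp [Function.update_of_ne hj])]
  rw [Function.update_self]

lemma map_pair_proj {ι ι' 𝒳 : Type*} [Fintype ι] [Fintype ι'] [DecidableEq ι'] [MeasurableSpace 𝒳]
    (m : ι ⊕ ι' → Measure 𝒳) [∀ s, IsProbabilityMeasure (m s)] (i : ι') :
    Measure.map (fun g : ι ⊕ ι' → 𝒳 => ((fun j : ι => g (Sum.inl j)), g (Sum.inr i)))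
      (Measure.pi m)
      = (Measure.pi fun j : ι => m (Sum.inl j)).prod (m (Sum.inr i)) := by
  have h1 : MeasurePreserving (MeasurableEquiv.sumPiEquivProdPi (fun _ : ι ⊕ ι' => 𝒳))
      (Measure.pi m)
      ((Measure.pi fun j => m (.inl j)).prod (Measure.pi fun j => m (.inr j))) :=
    measurePreserving_sumPiEquivProdPi m
  have hcomp : (fun g : ι ⊕ ι' → 𝒳 => ((fun j : ι => g (Sum.inl j)), g (Sum.inr i)))
      = (Prod.map id (Function.eval i))
        ∘ (MeasurableEquiv.sumPiEquivProdPi (fun _ : ι ⊕ ι' => 𝒳)) := by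
    funext g; rfl
  rw [hcomp, ← Measure.map_map (measurable_id.prodMap (measurable_pi_apply i))
      (MeasurableEquiv.measurable _), h1.map_eq,
    ← Measure.map_prod_map _ _ measurable_id (measurable_pi_apply i), Measure.map_id,
    map_eval_pi]

lemma map_vec_proj {ι ι' 𝒳 : Type*} [Fintype ι] [Fintype ι'] [MeasurableSpace 𝒳]
    (m : ι ⊕ ι' → Measure 𝒳) [∀ s, IsProbabilityMeasure (m s)] :
    Measure.map (fun g : ι ⊕ ι' → 𝒳 => (fun j : ι => g (Sum.inl j)))
      (Measure.pi m) = Measure.pi fun j : ι => m (Sum.inl j) := by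
  have h1 : MeasurePreserving (MeasurableEquiv.sumPiEquivProdPi (fun _ : ι ⊕ ι' => 𝒳))
      (Measure.pi m)
      ((Measure.pi fun j => m (.inl j)).prod (Measure.pi fun j => m (.inr j))) :=
    measurePreserving_sumPiEquivProdPi m
  have hcomp : (fun g : ι ⊕ ι' → 𝒳 => (fun j : ι => g (Sum.inl j)))
      = Prod.fst ∘ (MeasurableEquiv.sumPiEquivProdPi (fun _ : ι ⊕ ι' => 𝒳)) := by
    funext g; rfl
  rw [hcomp, ← Measure.map_map measurable_fst (MeasurableEquiv.measurable _), h1.map_eq]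
  simp

/-- The core Efron–Stein inequality on a finite product of probability measures. -/
lemma core {𝒳 : Type*} [MeasurableSpace 𝒳] :
    ∀ (n : ℕ) (ν : Fin n → Measure 𝒳), (∀ i, IsProbabilityMeasure (ν i)) →
      ∀ f : (Fin n → 𝒳) → ℝ, Measurable f → MemLp f 2 (Measure.pi ν) →
      variance f (Measure.pi ν) ≤ (1 / 2) * ∑ i, ∫ p,
        (f p.1 - f (Function.update p.1 i p.2)) ^ 2 ∂((Measure.pi ν).prod (ν i)) := by
  intro n
  induction n with
  | zero =>
    intro ν hprob f hfm hf
    haveI : ∀ i, IsProbabilityMeasure (ν i) := hprob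
    have hconst : f = fun _ => f (fun j => j.elim0) := by
      funext x; exact congrArg f (Subsingleton.elim _ _)
    rw [hconst, variance_eq_sub (memLp_const _)]
    simp
  | succ k IH =>
    intro ν hprob f hfm hf
    haveI : ∀ i, IsProbabilityMeasure (ν i) := hprob
    set ν' : Fin k → Measure 𝒳 := fun j => ν ((0 : Fin (k + 1)).succAbove j) with hν'
    haveI : ∀ j, IsProbabilityMeasure (ν' j) := fun j => hprob _
    set π : Measure (Fin (k + 1) → 𝒳) := Measure.pi ν with hπ
    set π' : Measure (Fin k → 𝒳) := Measure.pi ν' with hπ'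
    set ν₀ : Measure 𝒳 := ν 0 with hν₀
    set e := MeasurableEquiv.piFinSuccAbove (fun _ : Fin (k + 1) => 𝒳) 0 with he
    have mpe : MeasurePreserving e π (ν₀.prod π') := measurePreserving_piFinSuccAbove ν 0
    set h : 𝒳 → (Fin k → 𝒳) → ℝ := fun a w => f ((0 : Fin (k + 1)).insertNth a w) with hh
    have hsymm : ∀ q : 𝒳 × (Fin k → 𝒳), e.symm q = (0 : Fin (k + 1)).insertNth q.1 q.2 := by
      intro q
      simp only [he, MeasurableEquiv.piFinSuccAbove_symm_apply]
      rfl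
    -- measurability of h
    have hinsm : Measurable (fun q : 𝒳 × (Fin k → 𝒳) =>
        ((0 : Fin (k + 1)).insertNth q.1 q.2 : Fin (k + 1) → 𝒳)) := by
      have heq : (fun q : 𝒳 × (Fin k → 𝒳) =>
          ((0 : Fin (k + 1)).insertNth q.1 q.2 : Fin (k + 1) → 𝒳)) = ⇑e.symm :=
        funext fun q => (hsymm q).symm
      rw [heq]
      exact e.symm.measurable
    have hHm : Measurable (fun q : 𝒳 × (Fin k → 𝒳) => h q.1 q.2) := hfm.comp hinsm
    have hham : ∀ a, Measurable (h a) := fun a => hHm.comp measurable_prodMk_left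
    -- MemLp of uncurried h
    have hH2 : MemLp (fun q : 𝒳 × (Fin k → 𝒳) => h q.1 q.2) 2 (ν₀.prod π') := by
      have := hf.comp_measurePreserving (mpe.symm e)
      have heq : f ∘ ⇑e.symm = fun q : 𝒳 × (Fin k → 𝒳) => h q.1 q.2 := by
        funext q; rw [Function.comp_apply, hsymm]
      rwa [heq] at this
    have iH2 : Integrable (fun q : 𝒳 × (Fin k → 𝒳) => h q.1 q.2 ^ 2) (ν₀.prod π') :=
      hH2.integrable_sq
    have iH1 : Integrable (fun q : 𝒳 × (Fin k → 𝒳) => h q.1 q.2) (ν₀.prod π') :=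
      hH2.integrable one_le_two
    -- a.e. slice MemLp
    have hslice : ∀ᵐ a ∂ν₀, MemLp (h a) 2 π' := by
      filter_upwards [iH2.prod_right_ae] with a ha
      exact (memLp_two_iff_integrable_sq (hham a).aestronglyMeasurable).2 ha
    set G : 𝒳 → ℝ := fun a => ∫ w, h a w ^ 2 ∂π' with hG
    set F : 𝒳 → ℝ := fun a => ∫ w, h a w ∂π' with hF
    have iG : Integrable G ν₀ := iH2.integral_prod_left
    have iF : Integrable F ν₀ := iH1.integral_prod_left
    have iF2 : Integrable (fun a => F a ^ 2) ν₀ := by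
      refine Integrable.mono' iG ((iF.aestronglyMeasurable.mul
        iF.aestronglyMeasurable).congr ?_) ?_
      · filter_upwards with a using (pow_two (F a)).symm
      · filter_upwards [hslice] with a ha
        have h1 : (F a) ^ 2 ≤ G a := sq_integral_le ha
        have h2 : (0 : ℝ) ≤ (F a) ^ 2 := sq_nonneg _
        rw [Real.norm_eq_abs, abs_of_nonneg h2]
        exact h1
    have hF2 : MemLp F 2 ν₀ := (memLp_two_iff_integrable_sq iF.aestronglyMeasurable).2 iF2
    haveI : IsProbabilityMeasure π := by rw [hπ]; infer_instance
    haveI : IsProbabilityMeasure π' := by rw [hπ']; infer_instance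
    haveI : IsProbabilityMeasure ν₀ := hprob 0
    -- integrability of the Efron-Stein integrands
    have hu : ∀ i : Fin (k + 1), Integrable
        (fun p : (Fin (k + 1) → 𝒳) × 𝒳 => (f p.1 - f (update p.1 i p.2)) ^ 2)
        (π.prod (ν i)) := by
      intro i
      have h1 : MemLp (fun p : (Fin (k + 1) → 𝒳) × 𝒳 => f p.1) 2 (π.prod (ν i)) :=
        hf.comp_measurePreserving (mp_fst π (ν i))
      have h2 : MemLp (fun p : (Fin (k + 1) → 𝒳) × 𝒳 => f (update p.1 i p.2)) 2
          (π.prod (ν i)) :=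
        hf.comp_measurePreserving (measurePreserving_update ν i)
      exact memℒp_sub_sq_integrable h1 h2
    -- law of total variance
    have hfsq : ∫ x, f x ^ 2 ∂π = ∫ a, G a ∂ν₀ := by
      have e1 := (mpe.symm e).integral_comp' (fun x => f x ^ 2)
      simp only [hsymm] at e1
      rw [← e1, integral_prod _ iH2]
    have hfint : ∫ x, f x ∂π = ∫ a, F a ∂ν₀ := by
      have e2 := (mpe.symm e).integral_comp' f
      simp only [hsymm] at e2
      rw [← e2, integral_prod _ iH1]
    have eLTV : variance f π = (∫ a, (G a - F a ^ 2) ∂ν₀) + variance F ν₀ := by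
      rw [variance_eq_sub hf, variance_eq_sub hF2, integral_sub iG iF2]
      simp only [Pi.pow_apply]
      rw [hfsq, hfint]
      ring
    -- Part A : the conditional-variance part
    set v : Fin k → (𝒳 × ((Fin k → 𝒳) × 𝒳)) → ℝ :=
      fun j r => (h r.1 r.2.1 - h r.1 (update r.2.1 j r.2.2)) ^ 2 with hv_def
    have hueq : ∀ (j : Fin k) (p : (Fin (k + 1) → 𝒳) × 𝒳),
        (f p.1 - f (update p.1 ((0 : Fin (k + 1)).succAbove j) p.2)) ^ 2
          = (h (p.1 0) (Fin.removeNth 0 p.1)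
              - h (p.1 0) (update (Fin.removeNth 0 p.1) j p.2)) ^ 2 := by
      intro j p
      show _ = (f ((0 : Fin (k + 1)).insertNth (p.1 0) (Fin.removeNth 0 p.1))
          - f ((0 : Fin (k + 1)).insertNth (p.1 0) (update (Fin.removeNth 0 p.1) j p.2))) ^ 2
      rw [insertNth_update, Fin.insertNth_self_removeNth]
    have h1 : ∀ j : Fin k, Integrable (fun r : (𝒳 × (Fin k → 𝒳)) × 𝒳 =>
        (h r.1.1 r.1.2 - h r.1.1 (update r.1.2 j r.2)) ^ 2)
        ((ν₀.prod π').prod (ν ((0 : Fin (k + 1)).succAbove j))) := by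
      intro j
      have E1mp : MeasurePreserving (⇑(e.prodCongr (MeasurableEquiv.refl 𝒳)))
          (π.prod (ν ((0 : Fin (k + 1)).succAbove j)))
          ((ν₀.prod π').prod (ν ((0 : Fin (k + 1)).succAbove j))) :=
        mpe.prod (MeasurePreserving.id _)
      refine (E1mp.integrable_comp_emb
        (e.prodCongr (MeasurableEquiv.refl 𝒳)).measurableEmbedding).mp ?_
      have := hu ((0 : Fin (k + 1)).succAbove j)
      refine this.congr ?_
      filter_upwards with p
      exact hueq j p
    have hv : ∀ j : Fin k, Integrable (v j) (ν₀.prod (π'.prod (ν' j))) := by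
      intro j
      exact ((measurePreserving_prodAssoc ν₀ π' (ν ((0 : Fin (k + 1)).succAbove j))).integrable_comp_emb
        MeasurableEquiv.prodAssoc.measurableEmbedding).mp (h1 j)
    have iWfun : ∀ j : Fin k, Integrable
        (fun a => ∫ q, v j (a, q) ∂(π'.prod (ν' j))) ν₀ :=
      fun j => (hv j).integral_prod_left
    have intW : ∀ j : Fin k, ∫ a, (∫ q, v j (a, q) ∂(π'.prod (ν' j))) ∂ν₀
        = ∫ p, (f p.1 - f (update p.1 ((0 : Fin (k + 1)).succAbove j) p.2)) ^ 2
            ∂(π.prod (ν ((0 : Fin (k + 1)).succAbove j))) := by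
      intro j
      rw [← integral_prod _ (hv j)]
      have s1 : ∫ r, v j (MeasurableEquiv.prodAssoc r)
            ∂((ν₀.prod π').prod (ν ((0 : Fin (k + 1)).succAbove j)))
          = ∫ t, v j t ∂(ν₀.prod (π'.prod (ν' j))) :=
        (measurePreserving_prodAssoc ν₀ π' (ν ((0 : Fin (k + 1)).succAbove j))).integral_comp' _
      rw [← s1]
      have E1mp : MeasurePreserving (⇑(e.prodCongr (MeasurableEquiv.refl 𝒳)))
          (π.prod (ν ((0 : Fin (k + 1)).succAbove j)))
          ((ν₀.prod π').prod (ν ((0 : Fin (k + 1)).succAbove j))) :=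
        mpe.prod (MeasurePreserving.id _)
      have s2 := E1mp.integral_comp'
        (fun r => v j (MeasurableEquiv.prodAssoc r))
      rw [← s2]
      refine integral_congr_ae (Filter.Eventually.of_forall fun p => ?_)
      exact (hueq j p).symm
    have haeA : ∀ᵐ a ∂ν₀, G a - F a ^ 2
        ≤ (1 / 2) * ∑ j, ∫ q, v j (a, q) ∂(π'.prod (ν' j)) := by
      filter_upwards [hslice] with a ha
      have hva := IH ν' (fun j => hprob _) (h a) (hham a) ha
      have hGF : G a - F a ^ 2 = variance (h a) π' := by
        rw [variance_eq_sub ha]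
        simp only [Pi.pow_apply]
        rfl
      rw [hGF]
      exact hva
    have PartA : ∫ a, (G a - F a ^ 2) ∂ν₀
        ≤ (1 / 2) * ∑ j : Fin k, ∫ p,
            (f p.1 - f (update p.1 ((0 : Fin (k + 1)).succAbove j) p.2)) ^ 2
            ∂(π.prod (ν ((0 : Fin (k + 1)).succAbove j))) := by
      have hle := integral_mono_ae (iG.sub iF2)
        ((integrable_finset_sum _ fun j _ => iWfun j).const_mul (1 / 2)) haeA
      refine le_trans hle (le_of_eq ?_)
      rw [integral_const_mul, integral_finset_sum _ fun j _ => iWfun j]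
      congr 1
      exact Finset.sum_congr rfl fun j _ => intW j
    -- Part B : the first-coordinate part, via Jensen
    set J : ((𝒳 × 𝒳) × (Fin k → 𝒳)) → ℝ :=
      fun r => (h r.1.1 r.2 - h r.1.2 r.2) ^ 2 with hJ_def
    have m13 : MemLp (fun r : (𝒳 × 𝒳) × (Fin k → 𝒳) => h r.1.1 r.2) 2
        ((ν₀.prod ν₀).prod π') :=
      hH2.comp_measurePreserving ((mp_fst ν₀ ν₀).prod (MeasurePreserving.id π'))
    have m23 : MemLp (fun r : (𝒳 × 𝒳) × (Fin k → 𝒳) => h r.1.2 r.2) 2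
        ((ν₀.prod ν₀).prod π') :=
      hH2.comp_measurePreserving ((mp_snd ν₀ ν₀).prod (MeasurePreserving.id π'))
    have iJ : Integrable J ((ν₀.prod ν₀).prod π') := memℒp_sub_sq_integrable m13 m23
    have hKi : Integrable (fun p : 𝒳 × 𝒳 => ∫ w, J (p, w) ∂π') (ν₀.prod ν₀) :=
      iJ.integral_prod_left
    have iJ1 : Integrable (fun r : (𝒳 × 𝒳) × (Fin k → 𝒳) => h r.1.1 r.2 ^ 2)
        ((ν₀.prod ν₀).prod π') := m13.integrable_sq
    have iJ2 : Integrable (fun r : (𝒳 × 𝒳) × (Fin k → 𝒳) => h r.1.2 r.2 ^ 2)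
        ((ν₀.prod ν₀).prod π') := m23.integrable_sq
    have haeP : ∀ᵐ p ∂(ν₀.prod ν₀), (F p.1 - F p.2) ^ 2 ≤ ∫ w, J (p, w) ∂π' := by
      filter_upwards [iJ1.prod_right_ae, iJ2.prod_right_ae] with p h1 h2
      have ha1 : MemLp (h p.1) 2 π' :=
        (memLp_two_iff_integrable_sq (hham p.1).aestronglyMeasurable).2 h1
      have ha2 : MemLp (h p.2) 2 π' :=
        (memLp_two_iff_integrable_sq (hham p.2).aestronglyMeasurable).2 h2
      have hFsub : F p.1 - F p.2 = ∫ w, (h p.1 w - h p.2 w) ∂π' :=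
        (integral_sub (ha1.integrable one_le_two) (ha2.integrable one_le_two)).symm
      rw [hFsub]
      exact sq_integral_le (ha1.sub ha2)
    have hP : Integrable (fun p : 𝒳 × 𝒳 => (F p.1 - F p.2) ^ 2) (ν₀.prod ν₀) :=
      memℒp_sub_sq_integrable (hF2.comp_measurePreserving (mp_fst ν₀ ν₀))
        (hF2.comp_measurePreserving (mp_snd ν₀ ν₀))
    -- rearranging the triple integral
    set g2 : 𝒳 × ((Fin k → 𝒳) × 𝒳) → ℝ :=
      fun t => (h t.1 t.2.1 - h t.2.2 t.2.1) ^ 2 with hg2_def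
    have c1 : ∫ r, J r ∂((ν₀.prod ν₀).prod π')
        = ∫ t, (fun t : 𝒳 × (𝒳 × (Fin k → 𝒳)) =>
            (h t.1 t.2.2 - h t.2.1 t.2.2) ^ 2) t ∂(ν₀.prod (ν₀.prod π')) :=
      (measurePreserving_prodAssoc ν₀ ν₀ π').integral_comp'
        (fun t => (h t.1 t.2.2 - h t.2.1 t.2.2) ^ 2)
    have mpE2 : MeasurePreserving
        (⇑((MeasurableEquiv.refl 𝒳).prodCongr (MeasurableEquiv.prodComm
          (α := 𝒳) (β := Fin k → 𝒳))))
        (ν₀.prod (ν₀.prod π')) (ν₀.prod (π'.prod ν₀)) :=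
      (MeasurePreserving.id ν₀).prod Measure.measurePreserving_swap
    have c2 : ∫ t, (fun t : 𝒳 × (𝒳 × (Fin k → 𝒳)) =>
            (h t.1 t.2.2 - h t.2.1 t.2.2) ^ 2) t ∂(ν₀.prod (ν₀.prod π'))
        = ∫ t, g2 t ∂(ν₀.prod (π'.prod ν₀)) :=
      mpE2.integral_comp' g2
    have c3 : ∫ t, g2 t ∂(ν₀.prod (π'.prod ν₀))
        = ∫ r, (fun r : (𝒳 × (Fin k → 𝒳)) × 𝒳 => (h r.1.1 r.1.2 - h r.2 r.1.2) ^ 2) r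
            ∂((ν₀.prod π').prod ν₀) :=
      ((measurePreserving_prodAssoc ν₀ π' ν₀).integral_comp' g2).symm
    have E10mp : MeasurePreserving (⇑(e.prodCongr (MeasurableEquiv.refl 𝒳)))
        (π.prod ν₀) ((ν₀.prod π').prod ν₀) :=
      mpe.prod (MeasurePreserving.id _)
    have c4 : ∫ r, (fun r : (𝒳 × (Fin k → 𝒳)) × 𝒳 => (h r.1.1 r.1.2 - h r.2 r.1.2) ^ 2) r
            ∂((ν₀.prod π').prod ν₀)
        = ∫ p, (f p.1 - f (update p.1 (0 : Fin (k + 1)) p.2)) ^ 2 ∂(π.prod ν₀) := by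
      rw [← E10mp.integral_comp'
        (fun r : (𝒳 × (Fin k → 𝒳)) × 𝒳 => (h r.1.1 r.1.2 - h r.2 r.1.2) ^ 2)]
      refine integral_congr_ae (Filter.Eventually.of_forall fun p => ?_)
      show (f ((0 : Fin (k + 1)).insertNth (p.1 0) (Fin.removeNth 0 p.1))
          - f ((0 : Fin (k + 1)).insertNth p.2 (Fin.removeNth 0 p.1))) ^ 2 = _
      rw [Fin.insertNth_self_removeNth, Fin.insertNth_removeNth]
    have PartB : variance F ν₀
        ≤ (1 / 2) * ∫ p, (f p.1 - f (update p.1 (0 : Fin (k + 1)) p.2)) ^ 2 ∂(π.prod ν₀) := by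
      rw [variance_eq_half_integral hF2]
      have hmono : ∫ p, (F p.1 - F p.2) ^ 2 ∂(ν₀.prod ν₀)
          ≤ ∫ p, (∫ w, J (p, w) ∂π') ∂(ν₀.prod ν₀) :=
        integral_mono_ae hP hKi haeP
      have hrepr : ∫ p, (∫ w, J (p, w) ∂π') ∂(ν₀.prod ν₀)
          = ∫ p, (f p.1 - f (update p.1 (0 : Fin (k + 1)) p.2)) ^ 2 ∂(π.prod ν₀) := by
        rw [← integral_prod _ iJ, c1, c2, c3, c4]
      have h12 : (0:ℝ) ≤ 1 / 2 := by norm_num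
      calc (1 / 2) * ∫ p, (F p.1 - F p.2) ^ 2 ∂(ν₀.prod ν₀)
          ≤ (1 / 2) * ∫ p, (∫ w, J (p, w) ∂π') ∂(ν₀.prod ν₀) :=
            mul_le_mul_of_nonneg_left hmono h12
        _ = (1 / 2) * ∫ p, (f p.1 - f (update p.1 (0 : Fin (k + 1)) p.2)) ^ 2 ∂(π.prod ν₀) := by
            rw [hrepr]
    -- assembly
    rw [eLTV, Fin.sum_univ_succAbove
      (fun i => ∫ p, (f p.1 - f (update p.1 i p.2)) ^ 2 ∂(π.prod (ν i))) 0]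
    have := add_le_add PartA PartB
    linarith



end ES

open ES

/-- Efron–Stein inequality: for independent `X₁,…,Xₙ` with independent copies
`X₁',…,Xₙ'` (all `2n` variables jointly independent, `Xᵢ'` distributed as `Xᵢ`),
and a square-integrable `f`,
`Var(f(X)) ≤ (1/2) ∑ᵢ E[(f(X) − f^{(i)})²]` where `f^{(i)}` replaces the `i`-th
coordinate by `Xᵢ'`. -/
theorem stmt1 {Ω 𝒳 : Type*} [MeasureSpace Ω] [IsProbabilityMeasure (ℙ : Measure Ω)]
    [MeasurableSpace 𝒳] {n : ℕ}
    (X X' : Fin n → Ω → 𝒳)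
    (hmeas : ∀ i, Measurable (X i)) (hmeas' : ∀ i, Measurable (X' i))
    (hindep : iIndepFun (Sum.elim X X') ℙ)
    (hcopy : ∀ i, Measure.map (X' i) ℙ = Measure.map (X i) ℙ)
    (f : (Fin n → 𝒳) → ℝ)
    (hfmeas : Measurable f)
    (hf : MemLp (fun ω => f (fun j => X j ω)) 2 ℙ) :
    variance (fun ω => f (fun j => X j ω)) ℙ ≤
      (1 / 2) * ∑ i : Fin n,
        ∫ ω, (f (fun j => X j ω)
            - f (Function.update (fun j => X j ω) i (X' i ω))) ^ 2 ∂ℙ := by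
  classical
  set m : Fin n ⊕ Fin n → Measure 𝒳 := fun s => Measure.map (Sum.elim X X' s) ℙ with hm
  have hsel : ∀ s, Measurable (Sum.elim X X' s) := by
    rintro (i | i)
    · exact hmeas i
    · exact hmeas' i
  haveI : ∀ s, IsProbabilityMeasure (m s) :=
    fun s => Measure.isProbabilityMeasure_map (hsel s).aemeasurable
  set ν : Fin n → Measure 𝒳 := fun i => Measure.map (X i) ℙ with hν
  haveI hprobν : ∀ i, IsProbabilityMeasure (ν i) :=
    fun i => Measure.isProbabilityMeasure_map (hmeas i).aemeasurable
  set π : Measure (Fin n → 𝒳) := Measure.pi ν with hπ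
  haveI : IsProbabilityMeasure π := by rw [hπ]; infer_instance
  set Φ : Ω → (Fin n ⊕ Fin n) → 𝒳 := fun ω s => Sum.elim X X' s ω with hΦ
  have hΦm : Measurable Φ := measurable_pi_lambda _ hsel
  have hΦlaw : Measure.map Φ ℙ = Measure.pi m := map_pi_eq hsel hindep
  have hXm : Measurable (fun ω (j : Fin n) => X j ω) := measurable_pi_lambda _ hmeas
  have hXlaw : Measure.map (fun ω (j : Fin n) => X j ω) ℙ = π := by
    have hc : (fun ω (j : Fin n) => X j ω)
        = (fun g : (Fin n ⊕ Fin n) → 𝒳 => fun j : Fin n => g (Sum.inl j)) ∘ Φ := rfl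
    rw [hc, ← Measure.map_map (measurable_pi_lambda _ fun j => measurable_pi_apply _) hΦm,
      hΦlaw, map_vec_proj m]
    rfl
  have hfℒ : MemLp f 2 π := by
    rw [← hXlaw]
    exact (memLp_map_measure_iff hfmeas.aestronglyMeasurable hXm.aemeasurable).2 hf
  have hvar : variance (fun ω => f (fun j => X j ω)) ℙ = variance f π := by
    rw [variance_eq_sub hf, variance_eq_sub hfℒ, ← hXlaw]
    simp only [Pi.pow_apply]
    rw [integral_map hXm.aemeasurable hfmeas.aestronglyMeasurable,
      integral_map hXm.aemeasurable ((hfmeas.pow_const 2).aestronglyMeasurable)]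
  have hpairm : ∀ i, Measurable (fun ω => ((fun j : Fin n => X j ω), X' i ω)) :=
    fun i => hXm.prodMk (hmeas' i)
  have hpair : ∀ i, Measure.map (fun ω => ((fun j : Fin n => X j ω), X' i ω)) ℙ
      = π.prod (ν i) := by
    intro i
    have hc : (fun ω => ((fun j : Fin n => X j ω), X' i ω))
        = (fun g : (Fin n ⊕ Fin n) → 𝒳 =>
            ((fun j : Fin n => g (Sum.inl j)), g (Sum.inr i))) ∘ Φ := rfl
    rw [hc, ← Measure.map_map
      ((measurable_pi_lambda _ fun j => measurable_pi_apply _).prodMk (measurable_pi_apply _))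
      hΦm, hΦlaw, map_pair_proj m i]
    congr 1
    exact hcopy i
  have hum : ∀ i : Fin n, Measurable
      (fun p : (Fin n → 𝒳) × 𝒳 => (f p.1 - f (Function.update p.1 i p.2)) ^ 2) :=
    fun i => ((hfmeas.comp measurable_fst).sub (hfmeas.comp measurable_update')).pow_const 2
  have hterm : ∀ i : Fin n,
      ∫ ω, (f (fun j => X j ω) - f (Function.update (fun j => X j ω) i (X' i ω))) ^ 2 ∂ℙ
      = ∫ p, (f p.1 - f (Function.update p.1 i p.2)) ^ 2 ∂(π.prod (ν i)) := by
    intro i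
    rw [← hpair i, integral_map (hpairm i).aemeasurable (hum i).aestronglyMeasurable]
  rw [hvar]
  refine le_trans (core n ν hprobν f hfmeas hfℒ) (le_of_eq ?_)
  congr 1
  exact Finset.sum_congr rfl fun i _ => (hterm i).symm
end

section
/- Let Z be a standard normal random variable and let Φᶜ(t) = P(Z > t) denote its complementary CDF. Then for all t > 0: 1/(t + √(t² + 4)) < √(π/2)·exp(t²/2)·Φᶜ(t) < 1/(t + √(t² + 8/π)). -/
open Real

open Real MeasureTheory Set Filter

noncomputable def FF (t : ℝ) : ℝ := ∫ x in Set.Ioi t, Real.exp (-x^2/2)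

lemma integrable_gauss : MeasureTheory.Integrable (fun x : ℝ => Real.exp (-x^2/2)) := by
  have h := integrable_exp_neg_mul_sq (show (0:ℝ) < 1/2 by norm_num)
  convert h using 2 with x
  ring_nf

lemma FF_eq (t : ℝ) : FF t = FF 0 - ∫ x in (0:ℝ)..t, Real.exp (-x^2/2) := by
  have key : ∀ x : ℝ, FF x = (∫ y : ℝ, Real.exp (-y^2/2)) - ∫ y in Set.Iic x, Real.exp (-y^2/2) := by
    intro x
    have := MeasureTheory.integral_add_compl (measurableSet_Iic (a := x)) integrable_gauss
    rw [compl_Iic] at this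
    rw [FF]; linarith
  rw [key t, key 0]
  rw [← intervalIntegral.integral_Iic_sub_Iic (integrable_gauss.integrableOn) (integrable_gauss.integrableOn)
      (a := (0:ℝ)) (b := t)]
  ring

lemma FF_hasDerivAt (t : ℝ) : HasDerivAt FF (-(Real.exp (-t^2/2))) t := by
  have h1 : HasDerivAt (fun x => ∫ y in (0:ℝ)..x, Real.exp (-y^2/2)) (Real.exp (-t^2/2)) t := by
    apply intervalIntegral.integral_hasDerivAt_right
      (integrable_gauss.intervalIntegrable)
      (integrable_gauss.aestronglyMeasurable.stronglyMeasurableAtFilter)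
    exact (by continuity : Continuous fun x : ℝ => Real.exp (-x^2/2)).continuousAt
  have h2 : HasDerivAt (fun x => FF 0 - ∫ y in (0:ℝ)..x, Real.exp (-y^2/2)) (-(Real.exp (-t^2/2))) t :=
    by refine ((hasDerivAt_const t (FF 0)).sub h1).congr_deriv ?_; simp
  exact h2.congr_of_eventuallyEq (Filter.Eventually.of_forall fun x => FF_eq x)

lemma FF_zero : FF 0 = Real.sqrt (π/2) := by
  have h := integral_gaussian_Ioi (1/2)
  have h2 : FF 0 = Real.sqrt (π / (1/2)) / 2 := by
    rw [FF, ← h]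
    congr 1 with x
    ring_nf
  rw [h2]
  rw [show π / (1/2 : ℝ) = 2 * π by ring]
  rw [show Real.sqrt (2*π) / 2 = Real.sqrt (2*π) / Real.sqrt 4 by
    rw [show (4:ℝ) = 2^2 by norm_num, Real.sqrt_sq (by norm_num)]]
  rw [← Real.sqrt_div (by positivity)]
  rw [show (2:ℝ)*π/4 = π/2 by ring]

lemma FF_nonneg (t : ℝ) : 0 ≤ FF t :=
  MeasureTheory.setIntegral_nonneg measurableSet_Ioi (fun x _ => (Real.exp_pos _).le)

lemma integrableOn_exp_neg_Ioi' (t : ℝ) :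
    MeasureTheory.IntegrableOn (fun x : ℝ => Real.exp (-x)) (Set.Ioi t) := by
  have := exp_neg_integrableOn_Ioi t (show (0:ℝ) < 1 by norm_num)
  simpa using this

lemma FF_le (t : ℝ) : FF t ≤ Real.exp (1/2) * Real.exp (-t) := by
  have hmono : FF t ≤ ∫ x in Set.Ioi t, Real.exp (1/2) * Real.exp (-x) := by
    apply MeasureTheory.setIntegral_mono_on integrable_gauss.integrableOn
      ((integrableOn_exp_neg_Ioi' t).const_mul _) measurableSet_Ioi
    intro x _
    rw [← Real.exp_add]
    apply Real.exp_le_exp.mpr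
    nlinarith [sq_nonneg (x - 1)]
  calc FF t ≤ ∫ x in Set.Ioi t, Real.exp (1/2) * Real.exp (-x) := hmono
    _ = Real.exp (1/2) * ∫ x in Set.Ioi t, Real.exp (-x) := by
        rw [MeasureTheory.integral_const_mul]
    _ = Real.exp (1/2) * Real.exp (-t) := by rw [integral_exp_neg_Ioi]

lemma FF_tendsto : Filter.Tendsto FF Filter.atTop (nhds 0) := by
  apply squeeze_zero (fun t => FF_nonneg t) (fun t => FF_le t)
  rw [show (0:ℝ) = Real.exp (1/2) * 0 by ring]
  exact (Real.tendsto_exp_neg_atTop_nhds_zero).const_mul _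

lemma hasDerivAt_sqrt_sq_add (c t : ℝ) (hc : 0 < c) :
    HasDerivAt (fun x : ℝ => Real.sqrt (x^2 + c)) (t / Real.sqrt (t^2 + c)) t := by
  have hpos : 0 < t^2 + c := by positivity
  have h1 : HasDerivAt (fun x : ℝ => x^2 + c) (2*t) t := by
    simpa using (hasDerivAt_pow 2 t).add_const c
  have h2 := (Real.hasDerivAt_sqrt (ne_of_gt hpos)).comp t h1
  refine h2.congr_deriv ?_
  have hs : Real.sqrt (t^2 + c) ≠ 0 := by positivity
  field_simp

lemma hasDerivAt_gauss (t : ℝ) :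
    HasDerivAt (fun x : ℝ => Real.exp (-x^2/2)) (-t * Real.exp (-t^2/2)) t := by
  have h1 : HasDerivAt (fun x : ℝ => -x^2/2) (-t) t := by
    have h := (hasDerivAt_pow 2 t).const_mul (-(1/2) : ℝ)
    have : HasDerivAt (fun x : ℝ => -(1/2 : ℝ) * x^2) (-t) t := by
      refine h.congr_deriv ?_; push_cast; ring
    exact this.congr_of_eventuallyEq (Filter.Eventually.of_forall fun x => by ring)
  simpa [mul_comm] using h1.exp

/-- If `u` has negative derivative on `[a, ∞)` and tends to `0` at `+∞`, then `u a > 0`. -/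
lemma pos_of_deriv_neg_tendsto {u u' : ℝ → ℝ} {a : ℝ}
    (hd : ∀ x ∈ Set.Ici a, HasDerivAt u (u' x) x)
    (hneg : ∀ x ∈ Set.Ioi a, u' x < 0)
    (hlim : Filter.Tendsto u Filter.atTop (nhds 0)) : 0 < u a := by
  have hanti : StrictAntiOn u (Set.Ici a) := by
    apply strictAntiOn_of_deriv_neg (convex_Ici a)
    · exact fun x hx => (hd x hx).continuousAt.continuousWithinAt
    · intro x hx
      rw [interior_Ici] at hx
      rw [(hd x (Set.mem_Ici.mpr (le_of_lt hx))).deriv]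
      exact hneg x hx
  have h1 : u (a+1) < u a := hanti (Set.self_mem_Ici) (by simp) (by linarith)
  have h2 : (0:ℝ) ≤ u (a+1) := by
    apply le_of_tendsto hlim
    filter_upwards [Filter.eventually_ge_atTop (a+1)] with x hx
    exact hanti.antitoneOn (by simp) (by simp; linarith) hx
  linarith

/-- If `u` has positive derivative on `[a, ∞)` and tends to `0` at `+∞`, then `u a < 0`. -/
lemma neg_of_deriv_pos_tendsto {u u' : ℝ → ℝ} {a : ℝ}
    (hd : ∀ x ∈ Set.Ici a, HasDerivAt u (u' x) x)
    (hpos : ∀ x ∈ Set.Ioi a, 0 < u' x)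
    (hlim : Filter.Tendsto u Filter.atTop (nhds 0)) : u a < 0 := by
  have h := pos_of_deriv_neg_tendsto (u := fun x => -u x) (u' := fun x => -u' x) (a := a)
    (fun x hx => (hd x hx).neg) (fun x hx => by simpa using hpos x hx) (by simpa using hlim.neg)
  simpa using h

lemma hasDerivAt_bnd (K c t : ℝ) (hc : 0 < c) :
    HasDerivAt (fun x : ℝ => K * (Real.sqrt (x^2+c) - x) * Real.exp (-x^2/2))
      ((K * (t/Real.sqrt (t^2+c) - 1)) * Real.exp (-t^2/2) +
        (K * (Real.sqrt (t^2+c) - t)) * (-t * Real.exp (-t^2/2))) t := by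
  have h1 : HasDerivAt (fun x : ℝ => K * (Real.sqrt (x^2+c) - x))
      (K * (t/Real.sqrt (t^2+c) - 1)) t :=
    ((hasDerivAt_sqrt_sq_add c t hc).sub (hasDerivAt_id t)).const_mul K
  exact h1.mul (hasDerivAt_gauss t)

lemma deriv_rewrite (K c t : ℝ) (hc : 0 < c) :
    -(Real.exp (-t^2/2)) - ((K * (t/Real.sqrt (t^2+c) - 1)) * Real.exp (-t^2/2) +
        (K * (Real.sqrt (t^2+c) - t)) * (-t * Real.exp (-t^2/2)))
    = Real.exp (-t^2/2) *
        ((K*t^3 + K*(c-1)*t - Real.sqrt (t^2+c) * (K*t^2 + 1 - K)) / Real.sqrt (t^2+c)) := by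
  have hrp : 0 < Real.sqrt (t^2+c) := by positivity
  have hr2 : Real.sqrt (t^2+c)^2 = t^2 + c := Real.sq_sqrt (by positivity)
  set r := Real.sqrt (t^2+c) with hrdef
  field_simp
  linear_combination (K * t) * hr2

lemma lower_key (t s : ℝ) (ht : 0 < t) (hs : 0 < s) (hs2 : s^2 = t^2 + 4) :
    t*(t^2+3) < s*(t^2+1) := by
  by_contra hcon
  push_neg at hcon
  have h0 : 0 ≤ s*(t^2+1) := by positivity
  have h2 : (s*(t^2+1))^2 ≤ (t*(t^2+3))^2 := pow_le_pow_left₀ h0 hcon 2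
  have h3 : s^2*(t^2+1)^2 = (t^2+4)*(t^2+1)^2 := by rw [hs2]
  nlinarith [h2, h3]

lemma upper_keyA (c t r : ℝ) (hc2 : 2 < c) (hc4 : c < 4) (ht : 0 < t) (hr : 0 < r)
    (hr2 : r^2 = t^2 + c) (hsmall : t^2*(4-c) < (c-2)^2) :
    t^3 + (c-1)*t < r*(t^2 + c/2 - 1) := by
  by_contra hcon
  push_neg at hcon
  have h0 : 0 ≤ r*(t^2 + c/2 - 1) := by nlinarith
  have h2 : (r*(t^2 + c/2 - 1))^2 ≤ (t^3 + (c-1)*t)^2 := pow_le_pow_left₀ h0 hcon 2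
  have h3 : r^2*(t^2 + c/2 - 1)^2 = (t^2+c)*(t^2 + c/2 - 1)^2 := by rw [hr2]
  have h4 : 0 < c*((c-2)^2 - t^2*(4-c)) := mul_pos (by linarith) (by linarith)
  nlinarith [h2, h3, h4]

lemma upper_keyB (c t r : ℝ) (hc2 : 2 < c) (hc4 : c < 4) (ht : 0 < t) (hr : 0 < r)
    (hr2 : r^2 = t^2 + c) (hbig : (c-2)^2 < t^2*(4-c)) :
    r*(t^2 + c/2 - 1) < t^3 + (c-1)*t := by
  by_contra hcon
  push_neg at hcon
  have h0 : 0 ≤ t^3 + (c-1)*t := by nlinarith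
  have h2 : (t^3 + (c-1)*t)^2 ≤ (r*(t^2 + c/2 - 1))^2 := pow_le_pow_left₀ h0 hcon 2
  have h3 : r^2*(t^2 + c/2 - 1)^2 = (t^2+c)*(t^2 + c/2 - 1)^2 := by rw [hr2]
  have h4 : 0 < c*(t^2*(4-c) - (c-2)^2) := mul_pos (by linarith) (by linarith)
  nlinarith [h2, h3, h4]

lemma sqrt_ge_self (c x : ℝ) (hc : 0 ≤ c) (hx : 0 ≤ x) : x ≤ Real.sqrt (x^2 + c) := by
  nlinarith [Real.sq_sqrt (show (0:ℝ) ≤ x^2 + c by positivity),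
    Real.sqrt_nonneg (x^2+c), sq_nonneg (Real.sqrt (x^2+c) - x)]

lemma bnd_tendsto (K c : ℝ) (hK : 0 ≤ K) (hK1 : K ≤ 1) (hc : 0 < c) (hc4 : c ≤ 4) :
    Filter.Tendsto (fun x : ℝ => K * (Real.sqrt (x^2+c) - x) * Real.exp (-x^2/2))
      Filter.atTop (nhds 0) := by
  have hg : Filter.Tendsto (fun x : ℝ => 2/x) Filter.atTop (nhds 0) :=
    Filter.Tendsto.div_atTop tendsto_const_nhds Filter.tendsto_id
  apply squeeze_zero' ?_ ?_ hg
  · filter_upwards [Filter.eventually_ge_atTop (1:ℝ)] with x hx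
    have h1 := sqrt_ge_self c x hc.le (by linarith)
    exact mul_nonneg (mul_nonneg hK (by linarith)) (Real.exp_pos _).le
  · filter_upwards [Filter.eventually_ge_atTop (1:ℝ)] with x hx
    have hx0 : 0 < x := by linarith
    have h1 : Real.sqrt (x^2+c) ≤ x + 2/x := by
      rw [show x + 2/x = Real.sqrt ((x + 2/x)^2) from
        (Real.sqrt_sq (by positivity)).symm]
      apply Real.sqrt_le_sqrt
      have hsq : (x + 2/x)^2 = x^2 + 4 + 4/x^2 := by field_simp; ring
      have h4 : (0:ℝ) ≤ 4/x^2 := by positivity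
      nlinarith
    have h2 : Real.exp (-x^2/2) ≤ 1 := by
      rw [Real.exp_le_one_iff]
      nlinarith
    have h3 := sqrt_ge_self c x hc.le (by linarith)
    have h5 : 0 < Real.exp (-x^2/2) := Real.exp_pos _
    calc K * (Real.sqrt (x^2+c) - x) * Real.exp (-x^2/2)
        ≤ 1 * (Real.sqrt (x^2+c) - x) * 1 := by
          apply mul_le_mul
          · apply mul_le_mul hK1 le_rfl (by linarith) (by norm_num)
          · exact h2
          · exact h5.le
          · nlinarith
      _ = Real.sqrt (x^2+c) - x := by ring
      _ ≤ 2/x := by linarith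

lemma lower_bound_FF (t : ℝ) (ht : 0 < t) :
    (1/2 : ℝ) * (Real.sqrt (t^2+4) - t) * Real.exp (-t^2/2) < FF t := by
  have key := pos_of_deriv_neg_tendsto
    (u := fun x => FF x - (1/2 : ℝ) * (Real.sqrt (x^2+4) - x) * Real.exp (-x^2/2))
    (u' := fun x => -(Real.exp (-x^2/2)) - (((1/2 : ℝ) * (x/Real.sqrt (x^2+4) - 1)) * Real.exp (-x^2/2) +
        ((1/2 : ℝ) * (Real.sqrt (x^2+4) - x)) * (-x * Real.exp (-x^2/2)))) (a := t)
    (fun x _ => (FF_hasDerivAt x).sub (hasDerivAt_bnd (1/2) 4 x (by norm_num)))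
    (fun x hx => by
      have hx0 : 0 < x := lt_trans ht hx
      rw [deriv_rewrite (1/2) 4 x (by norm_num)]
      have hrp : 0 < Real.sqrt (x^2+4) := by positivity
      have hr2 : Real.sqrt (x^2+4)^2 = x^2 + 4 := Real.sq_sqrt (by positivity)
      have hk := lower_key x (Real.sqrt (x^2+4)) hx0 hrp hr2
      apply mul_neg_of_pos_of_neg (Real.exp_pos _)
      apply div_neg_of_neg_of_pos _ hrp
      nlinarith)
    (by
      have := FF_tendsto.sub (bnd_tendsto (1/2) 4 (by norm_num) (by norm_num) (by norm_num) (by norm_num))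
      simpa using this)
  linarith

lemma c_gt : 2 < 8/π := by
  rw [lt_div_iff₀ Real.pi_pos]
  nlinarith [Real.pi_lt_d2]

lemma c_lt : 8/π < 4 := by
  rw [div_lt_iff₀ Real.pi_pos]
  nlinarith [Real.pi_gt_three]

lemma w_zero : FF 0 - (π/4 : ℝ) * (Real.sqrt ((0:ℝ)^2 + 8/π) - 0) * Real.exp (-(0:ℝ)^2/2) = 0 := by
  have h8 : ((0:ℝ)^2 + 8/π) = (π/2) * (4/π)^2 := by
    have := Real.pi_pos
    field_simp
    ring
  rw [FF_zero, h8, Real.sqrt_mul (by positivity), Real.sqrt_sq (by positivity)]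
  have hs : 0 < Real.sqrt (π/2) := by positivity
  have := Real.pi_pos
  field_simp
  simp

lemma upper_bound_FF (t : ℝ) (ht : 0 < t) :
    FF t < (π/4 : ℝ) * (Real.sqrt (t^2 + 8/π) - t) * Real.exp (-t^2/2) := by
  have hπ := Real.pi_pos
  set c : ℝ := 8/π with hcdef
  have hc2 : 2 < c := c_gt
  have hc4 : c < 4 := c_lt
  have hKc : (π/4 : ℝ) * c = 2 := by rw [hcdef]; field_simp; ring
  have hK0 : (0:ℝ) < π/4 := by positivity
  have hK1 : (π/4 : ℝ) ≤ 1 := by nlinarith [Real.pi_lt_d2]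
  set tstar : ℝ := (c-2)/Real.sqrt (4-c) with htsdef
  have hts : 0 < tstar := by
    apply div_pos (by linarith) (Real.sqrt_pos.mpr (by linarith))
  have hsq4c : Real.sqrt (4-c)^2 = 4-c := Real.sq_sqrt (by linarith)
  have hs4cpos : 0 < Real.sqrt (4-c) := Real.sqrt_pos.mpr (by linarith)
  -- derivative sign rewriting
  have hderiv : ∀ x : ℝ, HasDerivAt
      (fun y => FF y - (π/4 : ℝ) * (Real.sqrt (y^2+c) - y) * Real.exp (-y^2/2))
      (-(Real.exp (-x^2/2)) - (((π/4 : ℝ) * (x/Real.sqrt (x^2+c) - 1)) * Real.exp (-x^2/2) +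
        ((π/4 : ℝ) * (Real.sqrt (x^2+c) - x)) * (-x * Real.exp (-x^2/2)))) x :=
    fun x => (FF_hasDerivAt x).sub (hasDerivAt_bnd (π/4) c x (by linarith))
  have hsign : ∀ x : ℝ, 0 < x →
      (-(Real.exp (-x^2/2)) - (((π/4 : ℝ) * (x/Real.sqrt (x^2+c) - 1)) * Real.exp (-x^2/2) +
        ((π/4 : ℝ) * (Real.sqrt (x^2+c) - x)) * (-x * Real.exp (-x^2/2))))
      = Real.exp (-x^2/2) * ((π/4) * (x^3 + (c-1)*x - Real.sqrt (x^2+c) * (x^2 + c/2 - 1)) / Real.sqrt (x^2+c)) := by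
    intro x hx
    rw [deriv_rewrite (π/4) c x (by linarith)]
    congr 1
    have hrp : 0 < Real.sqrt (x^2+c) := by positivity
    rw [hcdef]
    field_simp
    ring
  rcases lt_or_ge t tstar with hcase | hcase
  · -- small t : strict antitone on [0, tstar], w 0 = 0
    have hanti : StrictAntiOn
        (fun y => FF y - (π/4 : ℝ) * (Real.sqrt (y^2+c) - y) * Real.exp (-y^2/2))
        (Set.Icc 0 tstar) := by
      apply strictAntiOn_of_deriv_neg (convex_Icc 0 tstar)
      · exact fun x hx => (hderiv x).continuousAt.continuousWithinAt
      · intro x hx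
        rw [interior_Icc] at hx
        rw [(hderiv x).deriv, hsign x hx.1]
        have hrp : 0 < Real.sqrt (x^2+c) := by positivity
        have hr2 : Real.sqrt (x^2+c)^2 = x^2 + c := Real.sq_sqrt (by positivity)
        have hsmall : x^2*(4-c) < (c-2)^2 := by
          have h1 : x * Real.sqrt (4-c) < c-2 := by
            rw [← lt_div_iff₀ hs4cpos]; exact hx.2
          nlinarith [mul_nonneg hx.1.le hs4cpos.le]
        have hk := upper_keyA c x (Real.sqrt (x^2+c)) hc2 hc4 hx.1 hrp hr2 hsmall
        apply mul_neg_of_pos_of_neg (Real.exp_pos _)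
        apply div_neg_of_neg_of_pos _ hrp
        nlinarith
    have h1 := hanti (Set.left_mem_Icc.mpr hts.le) (Set.mem_Icc.mpr ⟨ht.le, hcase.le⟩) ht
    simp only at h1
    rw [w_zero] at h1
    linarith
  · -- large t : increasing towards limit 0
    have key := neg_of_deriv_pos_tendsto
      (u := fun y => FF y - (π/4 : ℝ) * (Real.sqrt (y^2+c) - y) * Real.exp (-y^2/2))
      (u' := fun x => -(Real.exp (-x^2/2)) - (((π/4 : ℝ) * (x/Real.sqrt (x^2+c) - 1)) * Real.exp (-x^2/2) +
        ((π/4 : ℝ) * (Real.sqrt (x^2+c) - x)) * (-x * Real.exp (-x^2/2)))) (a := t)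
      (fun x _ => hderiv x)
      (fun x hx => by
        have hx0 : 0 < x := lt_trans ht hx
        rw [hsign x hx0]
        have hrp : 0 < Real.sqrt (x^2+c) := by positivity
        have hr2 : Real.sqrt (x^2+c)^2 = x^2 + c := Real.sq_sqrt (by positivity)
        have hbig : (c-2)^2 < x^2*(4-c) := by
          have h1 : tstar < x := lt_of_le_of_lt hcase hx
          have h2 : c-2 < x * Real.sqrt (4-c) := by
            rw [← div_lt_iff₀ hs4cpos]; exact h1
          nlinarith [mul_nonneg hx0.le hs4cpos.le]
        have hk := upper_keyB c x (Real.sqrt (x^2+c)) hc2 hc4 hx0 hrp hr2 hbig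
        apply mul_pos (Real.exp_pos _)
        apply div_pos _ hrp
        nlinarith)
      (by
        have := FF_tendsto.sub (bnd_tendsto (π/4) c hK0.le hK1 (by linarith) (by linarith))
        simpa using this)
    linarith

/-- Two-sided Mills-ratio bounds for the standard normal tail
`Φᶜ(t) = (1/√(2π)) ∫_t^∞ e^{−x²/2} dx`, for `t > 0`. -/
theorem stmt8 (t : ℝ) (ht : 0 < t) :
    1 / (t + Real.sqrt (t ^ 2 + 4)) <
      Real.sqrt (π / 2) * Real.exp (t ^ 2 / 2) *
        ((1 / Real.sqrt (2 * π)) * ∫ x in Set.Ioi t, Real.exp (-x ^ 2 / 2)) ∧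
    Real.sqrt (π / 2) * Real.exp (t ^ 2 / 2) *
        ((1 / Real.sqrt (2 * π)) * ∫ x in Set.Ioi t, Real.exp (-x ^ 2 / 2)) <
      1 / (t + Real.sqrt (t ^ 2 + 8 / π)) := by
  have hπ := Real.pi_pos
  rw [show (∫ x in Set.Ioi t, Real.exp (-x ^ 2 / 2)) = FF t from rfl]
  have hsπ2 : (0:ℝ) < Real.sqrt (π/2) := Real.sqrt_pos.mpr (by positivity)
  have h2s : Real.sqrt (2*π) = 2 * Real.sqrt (π/2) := by
    rw [show (2:ℝ)*π = 4*(π/2) by ring, Real.sqrt_mul (by norm_num : (0:ℝ) ≤ 4),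
      show Real.sqrt 4 = 2 by
        rw [show (4:ℝ) = 2^2 by norm_num, Real.sqrt_sq (by norm_num)]]
  have hM : Real.sqrt (π / 2) * Real.exp (t ^ 2 / 2) * ((1 / Real.sqrt (2 * π)) * FF t)
      = Real.exp (t^2/2) * FF t / 2 := by
    rw [h2s]
    field_simp
  rw [hM]
  have hexp : 0 < Real.exp (t^2/2) := Real.exp_pos _
  have hee : Real.exp (t^2/2) * Real.exp (-t^2/2) = 1 := by
    rw [← Real.exp_add, show t^2/2 + -t^2/2 = 0 by ring, Real.exp_zero]
  constructor
  · set s := Real.sqrt (t^2+4) with hsdef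
    have hsp : 0 < s := by positivity
    have hs2 : s^2 = t^2+4 := Real.sq_sqrt (by positivity)
    have h1 : 1/(t+s) = (s-t)/4 := by
      rw [div_eq_div_iff (by positivity : (0:ℝ) < t+s).ne' (by norm_num : (4:ℝ) ≠ 0)]
      nlinarith
    have h3 := mul_lt_mul_of_pos_left (lower_bound_FF t ht)
      (show 0 < Real.exp (t^2/2)/2 by positivity)
    have h4 : Real.exp (t^2/2)/2 * ((1/2 : ℝ)*(s-t)*Real.exp (-t^2/2)) = (s-t)/4 := by
      rw [show Real.exp (t^2/2)/2 * ((1/2 : ℝ)*(s-t)*Real.exp (-t^2/2))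
          = (s-t)/4 * (Real.exp (t^2/2) * Real.exp (-t^2/2)) by ring, hee, mul_one]
    linarith [h3, h4, h1]
  · set r := Real.sqrt (t^2+8/π) with hrdef
    have hrp : 0 < r := by positivity
    have hr2 : r^2 = t^2+8/π := Real.sq_sqrt (by positivity)
    have h1 : 1/(t+r) = π*(r-t)/8 := by
      rw [div_eq_div_iff (by positivity : (0:ℝ) < t+r).ne' (by norm_num : (8:ℝ) ≠ 0)]
      have h8 : π * (8/π) = 8 := by field_simp
      linear_combination (-π) * hr2 - h8
    have h3 := mul_lt_mul_of_pos_left (upper_bound_FF t ht)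
      (show 0 < Real.exp (t^2/2)/2 by positivity)
    have h4 : Real.exp (t^2/2)/2 * ((π/4 : ℝ)*(r-t)*Real.exp (-t^2/2)) = π*(r-t)/8 := by
      rw [show Real.exp (t^2/2)/2 * ((π/4 : ℝ)*(r-t)*Real.exp (-t^2/2))
          = π*(r-t)/8 * (Real.exp (t^2/2) * Real.exp (-t^2/2)) by ring, hee, mul_one]
    linarith [h3, h4, h1]
end

section
/- Let X ~ N(μ, σ²) with σ > 0. For any x > μ, with t = (x − μ)/σ, the tail probability satisfies √(2/π)·exp(−t²/2)/(t + √(t² + 4)) ≤ P(X > x) ≤ √(2/π)·exp(−t²/2)/(t + √(t² + 8/π)). -/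
open MeasureTheory ProbabilityTheory Real Filter Set

noncomputable def TT (t : ℝ) : ℝ := ∫ u in Set.Ioi t, Real.exp (-u ^ 2 / 2)

lemma integrable_g : Integrable (fun u : ℝ => Real.exp (-u ^ 2 / 2)) := by
  have := integrable_exp_neg_mul_sq (b := (1/2 : ℝ)) (by norm_num)
  convert this using 2 with u
  ring_nf

lemma gauss_reduction (μ σ x : ℝ) (hσ : 0 < σ) :
    (gaussianReal μ ⟨σ ^ 2, sq_nonneg σ⟩ {y | x < y}).toReal
      = (Real.sqrt (2 * π))⁻¹ * TT ((x - μ) / σ) := by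
  have hmap : (gaussianReal 0 1).map (fun z => σ * z + μ)
      = gaussianReal μ ⟨σ ^ 2, sq_nonneg σ⟩ := by
    have h1 : (gaussianReal 0 1).map (σ * ·) = gaussianReal 0 ⟨σ ^ 2, sq_nonneg σ⟩ := by
      rw [gaussianReal_map_const_mul]
      norm_num
      rfl
    have h2 : ((gaussianReal 0 ⟨σ ^ 2, sq_nonneg σ⟩).map (· + μ))
        = gaussianReal μ ⟨σ ^ 2, sq_nonneg σ⟩ := by
      exact (gaussianReal_map_add_const μ).trans (by norm_num)
    rw [← h2, ← h1, Measure.map_map (by fun_prop) (by fun_prop)]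
    rfl
  have hpre : (fun z => σ * z + μ) ⁻¹' {y | x < y} = Set.Ioi ((x - μ) / σ) := by
    ext z
    simp only [Set.mem_preimage, Set.mem_setOf_eq, Set.mem_Ioi]
    rw [div_lt_iff₀ hσ]
    constructor <;> intro h <;> nlinarith
  rw [← hmap, Measure.map_apply (by fun_prop) (by exact measurableSet_lt measurable_const measurable_id),
    hpre, gaussianReal_apply_eq_integral _ (by norm_num)]
  rw [ENNReal.toReal_ofReal (setIntegral_nonneg measurableSet_Ioi
    (fun y _ => (gaussianPDFReal_pos _ _ y (by norm_num)).le))]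
  have : ∀ u : ℝ, gaussianPDFReal 0 1 u = (Real.sqrt (2 * π))⁻¹ * Real.exp (-u ^ 2 / 2) := by
    intro u
    simp [gaussianPDFReal]
  simp_rw [this]
  rw [TT, integral_const_mul]

lemma TT_eq (t : ℝ) : TT t = TT 0 - ∫ u in (0:ℝ)..t, Real.exp (-u ^ 2 / 2) := by
  have key : ∀ a b : ℝ, a ≤ b → TT a = (∫ u in a..b, Real.exp (-u ^ 2 / 2)) + TT b := by
    intro a b hab
    rw [intervalIntegral.integral_of_le hab, TT, TT, ← Set.Ioc_union_Ioi_eq_Ioi hab,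
      setIntegral_union (Set.Ioc_disjoint_Ioi le_rfl) measurableSet_Ioi
        integrable_g.integrableOn integrable_g.integrableOn]
  rcases le_total 0 t with h | h
  · have := key 0 t h; linarith
  · have := key t 0 h
    rw [intervalIntegral.integral_symm] at this
    linarith

lemma hasDerivAt_TT (t : ℝ) : HasDerivAt TT (-(Real.exp (-t ^ 2 / 2))) t := by
  have h : HasDerivAt (fun u => ∫ x in (0:ℝ)..u, Real.exp (-x ^ 2 / 2))
      (Real.exp (-t ^ 2 / 2)) t := by
    apply intervalIntegral.integral_hasDerivAt_right integrable_g.intervalIntegrable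
    · exact integrable_g.aestronglyMeasurable.stronglyMeasurableAtFilter
    · exact (by continuity : Continuous fun u : ℝ => Real.exp (-u ^ 2 / 2)).continuousAt
  have : HasDerivAt (fun u => TT 0 - ∫ x in (0:ℝ)..u, Real.exp (-x ^ 2 / 2))
      (-(Real.exp (-t ^ 2 / 2))) t := (h.const_sub (TT 0))
  exact this.congr_of_eventuallyEq (Filter.Eventually.of_forall fun u => TT_eq u)

lemma tendsto_TT : Tendsto TT atTop (nhds 0) := by
  have h := intervalIntegral_tendsto_integral_Ioi 0 integrable_g.integrableOn tendsto_id
  have : Tendsto (fun t => TT 0 - ∫ u in (0:ℝ)..t, Real.exp (-u ^ 2 / 2)) atTop (nhds (TT 0 - TT 0)) :=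
    (tendsto_const_nhds.sub h)
  simp only [sub_self] at this
  exact this.congr fun t => (TT_eq t).symm

lemma TT_zero : TT 0 = Real.sqrt (π / 2) := by
  have := integral_gaussian_Ioi (1/2)
  rw [TT]
  rw [show (π / (1/2)) = 2 * π by ring] at this
  have h2 : ∀ u : ℝ, -u ^ 2 / 2 = -(1/2) * u ^ 2 := fun u => by ring
  simp_rw [h2, this]
  rw [Real.sqrt_mul (by norm_num), Real.sqrt_div (le_of_lt Real.pi_pos)]
  have h2s : Real.sqrt 2 * Real.sqrt 2 = 2 := Real.mul_self_sqrt (by norm_num)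
  have h2pos : (0:ℝ) < Real.sqrt 2 := Real.sqrt_pos.mpr (by norm_num)
  field_simp
  nlinarith [Real.sqrt_nonneg π]

noncomputable def LL (c t : ℝ) : ℝ := Real.exp (-t ^ 2 / 2) * (Real.sqrt (t ^ 2 + c) - t)

lemma hasDerivAt_LL (c : ℝ) (hc : 0 < c) (t : ℝ) :
    HasDerivAt (LL c) (Real.exp (-t ^ 2 / 2) *
      (-t * (Real.sqrt (t ^ 2 + c) - t) + (t / Real.sqrt (t ^ 2 + c) - 1))) t := by
  have hpos : (0:ℝ) < t ^ 2 + c := by positivity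
  have hs : HasDerivAt (fun u : ℝ => Real.sqrt (u ^ 2 + c)) (t / Real.sqrt (t ^ 2 + c)) t := by
    have h1 : HasDerivAt (fun u : ℝ => u ^ 2 + c) (2 * t) t := by
      simpa using (hasDerivAt_pow 2 t).add_const c
    have := (Real.hasDerivAt_sqrt hpos.ne').comp t h1
    refine this.congr_deriv ?_
    field_simp
  have he : HasDerivAt (fun u : ℝ => Real.exp (-u ^ 2 / 2))
      (Real.exp (-t ^ 2 / 2) * (-t)) t := by
    have h1 : HasDerivAt (fun u : ℝ => -u ^ 2 / 2) (-t) t := by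
      have := ((hasDerivAt_pow 2 t).neg).div_const 2
      refine this.congr_deriv ?_
      push_cast; ring
    exact (Real.hasDerivAt_exp _).comp t h1
  have := he.mul (hs.sub (hasDerivAt_id t))
  simp only [Pi.sub_apply, id] at this
  refine this.congr_deriv ?_
  ring

lemma LL_nonneg (c t : ℝ) (hc : 0 ≤ c) : 0 ≤ LL c t := by
  have : t ≤ Real.sqrt (t ^ 2 + c) := by
    calc t ≤ |t| := le_abs_self t
    _ = Real.sqrt (t ^ 2) := (Real.sqrt_sq_eq_abs t).symm
    _ ≤ _ := Real.sqrt_le_sqrt (by linarith)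
  have h2 : (0:ℝ) < Real.exp (-t ^ 2 / 2) := Real.exp_pos _
  rw [LL]
  nlinarith

lemma tendsto_LL (c : ℝ) (hc : 0 ≤ c) : Filter.Tendsto (LL c) Filter.atTop (nhds 0) := by
  have hexp : Filter.Tendsto (fun t : ℝ => Real.exp (-t ^ 2 / 2) * Real.sqrt c)
      Filter.atTop (nhds 0) := by
    have h1 : Filter.Tendsto (fun t : ℝ => -t ^ 2 / 2) Filter.atTop Filter.atBot := by
      apply Filter.Tendsto.atBot_div_const (by norm_num : (0:ℝ) < 2)
      exact Filter.tendsto_neg_atBot_iff.mpr (tendsto_pow_atTop (by norm_num))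
    have := (Real.tendsto_exp_atBot.comp h1).mul_const (Real.sqrt c)
    simpa using this
  apply squeeze_zero' (Filter.Eventually.of_forall fun t => LL_nonneg c t hc) _ hexp
  filter_upwards [Filter.eventually_ge_atTop (0:ℝ)] with t ht
  have hkey : Real.sqrt (t ^ 2 + c) ≤ t + Real.sqrt c := by
    rw [show t + Real.sqrt c = Real.sqrt ((t + Real.sqrt c) ^ 2) from
      (Real.sqrt_sq (by positivity)).symm]
    apply Real.sqrt_le_sqrt
    nlinarith [Real.sq_sqrt hc, Real.sqrt_nonneg c]
  rw [LL]
  have h2 : (0:ℝ) < Real.exp (-t ^ 2 / 2) := Real.exp_pos _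
  nlinarith

lemma lower_bound (t : ℝ) : LL 4 t / 2 ≤ TT t := by
  set g : ℝ → ℝ := fun u => TT u - LL 4 u / 2 with hg
  have hderiv : ∀ u : ℝ, HasDerivAt g
      (Real.exp (-u ^ 2 / 2) / (2 * Real.sqrt (u ^ 2 + 4)) *
        ((u ^ 3 + 3 * u) - (u ^ 2 + 1) * Real.sqrt (u ^ 2 + 4))) u := by
    intro u
    have h := (hasDerivAt_TT u).sub ((hasDerivAt_LL 4 (by norm_num) u).div_const 2)
    refine h.congr_deriv ?_
    have hspos : (0:ℝ) < Real.sqrt (u ^ 2 + 4) := Real.sqrt_pos.mpr (by positivity)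
    have hs2 : Real.sqrt (u ^ 2 + 4) ^ 2 = u ^ 2 + 4 := Real.sq_sqrt (by positivity)
    field_simp
    linear_combination u * hs2
  have hderiv_nonpos : ∀ u : ℝ, deriv g u ≤ 0 := by
    intro u
    rw [(hderiv u).deriv]
    have hspos : (0:ℝ) < Real.sqrt (u ^ 2 + 4) := Real.sqrt_pos.mpr (by positivity)
    have hs2 : Real.sqrt (u ^ 2 + 4) ^ 2 = u ^ 2 + 4 := Real.sq_sqrt (by positivity)
    have key : u ^ 3 + 3 * u ≤ (u ^ 2 + 1) * Real.sqrt (u ^ 2 + 4) := by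
      set s := Real.sqrt (u ^ 2 + 4)
      have hQ : ((u ^ 2 + 1) * s) ^ 2 = (u ^ 3 + 3 * u) ^ 2 + 4 := by
        linear_combination (u ^ 2 + 1) ^ 2 * hs2
      nlinarith [mul_nonneg (by positivity : (0:ℝ) ≤ u ^ 2 + 1) hspos.le]
    apply mul_nonpos_of_nonneg_of_nonpos
    · positivity
    · linarith
  have hanti : AntitoneOn g (Set.Ici t) := by
    apply antitoneOn_of_deriv_nonpos (convex_Ici t)
    · exact Continuous.continuousOn (by
        have : Continuous g := by
          apply Continuous.sub
          · exact (continuous_iff_continuousAt.mpr fun u => (hasDerivAt_TT u).continuousAt)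
          · exact Continuous.div_const (continuous_iff_continuousAt.mpr fun u =>
              (hasDerivAt_LL 4 (by norm_num) u).continuousAt) 2
        exact this)
    · exact fun u _ => (hderiv u).differentiableAt.differentiableWithinAt
    · exact fun u _ => hderiv_nonpos u
  have htend : Filter.Tendsto g Filter.atTop (nhds 0) := by
    have := tendsto_TT.sub ((tendsto_LL 4 (by norm_num)).div_const 2)
    simpa using this
  have h0 : 0 ≤ g t := by
    apply le_of_tendsto htend
    filter_upwards [Filter.eventually_ge_atTop t] with u hu
    exact hanti (Set.self_mem_Ici) hu hu
  simpa [hg] using h0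

lemma pi_facts : 2 < π ∧ π < 4 := ⟨by nlinarith [Real.pi_gt_three], by nlinarith [Real.pi_lt_d2]⟩

lemma hasDerivAt_upper (u : ℝ) :
    HasDerivAt (fun v => (π / 4) * LL (8 / π) v - TT v)
      (Real.exp (-u ^ 2 / 2) / (4 * Real.sqrt (u ^ 2 + 8 / π)) *
        (π * u ^ 2 * Real.sqrt (u ^ 2 + 8 / π) + (4 - π) * Real.sqrt (u ^ 2 + 8 / π)
          - π * u ^ 3 - (8 - π) * u)) u := by
  have hπ := pi_facts
  have hb : (0:ℝ) < 8 / π := by positivity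
  have hpos : (0:ℝ) < u ^ 2 + 8 / π := by positivity
  have hspos : (0:ℝ) < Real.sqrt (u ^ 2 + 8 / π) := Real.sqrt_pos.mpr hpos
  have hs2 : Real.sqrt (u ^ 2 + 8 / π) ^ 2 = u ^ 2 + 8 / π := Real.sq_sqrt hpos.le
  have hπs : π * Real.sqrt (u ^ 2 + 8 / π) ^ 2 = π * u ^ 2 + 8 := by
    rw [hs2]; field_simp
  have h := (((hasDerivAt_LL (8 / π) hb u).const_mul (π / 4))).sub (hasDerivAt_TT u)
  refine h.congr_deriv ?_
  set s := Real.sqrt (u ^ 2 + 8 / π) with hsdef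
  field_simp
  linear_combination (-u) * hπs

lemma p_sign (u : ℝ) (hu : 0 ≤ u) :
    let s := Real.sqrt (u ^ 2 + 8 / π)
    (π * (π - 2) * u ^ 2 ≤ (4 - π) ^ 2 →
      0 ≤ π * u ^ 2 * s + (4 - π) * s - π * u ^ 3 - (8 - π) * u) ∧
    ((4 - π) ^ 2 ≤ π * (π - 2) * u ^ 2 →
      π * u ^ 2 * s + (4 - π) * s - π * u ^ 3 - (8 - π) * u ≤ 0) := by
  intro s
  have hπ := pi_facts
  have hpos : (0:ℝ) < u ^ 2 + 8 / π := by positivity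
  have hspos : (0:ℝ) < s := Real.sqrt_pos.mpr hpos
  have hs2 : s ^ 2 = u ^ 2 + 8 / π := Real.sq_sqrt hpos.le
  have hπs : π * s ^ 2 = π * u ^ 2 + 8 := by
    rw [hs2]; field_simp
  set Q := (π * u ^ 2 + (4 - π)) * s with hQdef
  set R := π * u ^ 3 + (8 - π) * u with hRdef
  have hQnn : 0 ≤ Q := by
    apply mul_nonneg _ hspos.le
    nlinarith
  have hRnn : 0 ≤ R := by nlinarith
  have hkey : π * Q ^ 2 - π * R ^ 2 = 8 * ((4 - π) ^ 2 - π * (π - 2) * u ^ 2) := by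
    rw [hQdef, hRdef]
    linear_combination (π * u ^ 2 + (4 - π)) ^ 2 * hπs
  constructor
  · intro hle
    have hQ2 : R ^ 2 ≤ Q ^ 2 := by nlinarith
    have := Real.sqrt_le_sqrt hQ2
    rw [Real.sqrt_sq hRnn, Real.sqrt_sq hQnn] at this
    rw [hQdef, hRdef] at this
    nlinarith
  · intro hle
    have hQ2 : Q ^ 2 ≤ R ^ 2 := by nlinarith
    have := Real.sqrt_le_sqrt hQ2
    rw [Real.sqrt_sq hRnn, Real.sqrt_sq hQnn] at this
    rw [hQdef, hRdef] at this
    nlinarith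

lemma upper_zero : (π / 4) * LL (8 / π) 0 - TT 0 = 0 := by
  have hπ := pi_facts
  rw [TT_zero, LL]
  norm_num
  have h8 : Real.sqrt 8 * Real.sqrt 2 = 4 := by
    rw [← Real.sqrt_mul (by norm_num)]
    rw [show (8:ℝ) * 2 = 4 ^ 2 by norm_num, Real.sqrt_sq (by norm_num)]
  have hππ : Real.sqrt π * Real.sqrt π = π := Real.mul_self_sqrt Real.pi_pos.le
  have hπspos : (0:ℝ) < Real.sqrt π := Real.sqrt_pos.mpr Real.pi_pos
  have h2pos : (0:ℝ) < Real.sqrt 2 := Real.sqrt_pos.mpr (by norm_num)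
  rw [sub_eq_zero]
  field_simp
  linear_combination π * h8 - 4 * hππ

lemma upper_bound (t : ℝ) (ht : 0 ≤ t) : TT t ≤ (π / 4) * LL (8 / π) t := by
  have hπ := pi_facts
  set h : ℝ → ℝ := fun u => (π / 4) * LL (8 / π) u - TT u with hhdef
  suffices hsuf : 0 ≤ h t by
    simp only [hhdef] at hsuf; linarith
  have hcont : Continuous h := by
    apply Continuous.sub
    · exact continuous_const.mul (continuous_iff_continuousAt.mpr fun u =>
        (hasDerivAt_LL (8 / π) (by positivity) u).continuousAt)
    · exact continuous_iff_continuousAt.mpr fun u => (hasDerivAt_TT u).continuousAt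
  set t₀ : ℝ := (4 - π) / Real.sqrt (π * (π - 2)) with ht₀def
  have hsq : Real.sqrt (π * (π - 2)) ^ 2 = π * (π - 2) := Real.sq_sqrt (by nlinarith)
  have hsqpos : (0:ℝ) < Real.sqrt (π * (π - 2)) := Real.sqrt_pos.mpr (by nlinarith)
  have ht₀pos : 0 < t₀ := div_pos (by linarith) hsqpos
  have ht₀sq : π * (π - 2) * t₀ ^ 2 = (4 - π) ^ 2 := by
    rw [ht₀def, div_pow]
    rw [hsq]
    rw [mul_comm]; exact div_mul_cancel₀ _ (ne_of_gt (by nlinarith : (0:ℝ) < π * (π - 2)))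
  rcases le_total t t₀ with hcase | hcase
  · -- monotone on [0, t₀]
    have hmono : MonotoneOn h (Set.Icc 0 t₀) := by
      apply monotoneOn_of_deriv_nonneg (convex_Icc 0 t₀) hcont.continuousOn
      · exact fun u _ => (hasDerivAt_upper u).differentiableAt.differentiableWithinAt
      · intro u hu
        rw [interior_Icc] at hu
        rw [(hasDerivAt_upper u).deriv]
        apply mul_nonneg (by positivity)
        apply (p_sign u hu.1.le).1
        have hππ : (0:ℝ) < π * (π - 2) := by nlinarith
        have hprod : 0 ≤ π * (π - 2) * ((t₀ - u) * (t₀ + u)) :=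
          mul_nonneg hππ.le (mul_nonneg (by nlinarith [hu.2]) (by nlinarith [hu.1, ht₀pos]))
        nlinarith [ht₀sq, hprod]
    have h0 : h 0 = 0 := upper_zero
    have := hmono (Set.mem_Icc.mpr ⟨le_rfl, by linarith⟩) (Set.mem_Icc.mpr ⟨ht, hcase⟩) ht
    rw [h0] at this
    exact this
  · -- antitone on [t₀, ∞), tends to 0
    have hanti : AntitoneOn h (Set.Ici t) := by
      apply antitoneOn_of_deriv_nonpos (convex_Ici t) hcont.continuousOn
      · exact fun u _ => (hasDerivAt_upper u).differentiableAt.differentiableWithinAt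
      · intro u hu
        rw [interior_Ici] at hu
        have hut₀ : t₀ ≤ u := le_of_lt (lt_of_le_of_lt hcase hu)
        rw [(hasDerivAt_upper u).deriv]
        apply mul_nonpos_of_nonneg_of_nonpos (by positivity)
        have := (p_sign u (by linarith)).2
        apply this
        have hππ : (0:ℝ) < π * (π - 2) := by nlinarith
        have hprod : 0 ≤ π * (π - 2) * ((u - t₀) * (u + t₀)) :=
          mul_nonneg hππ.le (mul_nonneg (by linarith) (by linarith))
        nlinarith [ht₀sq, hprod]
    have htend : Filter.Tendsto h Filter.atTop (nhds 0) := by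
      have := ((tendsto_LL (8 / π) (by positivity)).const_mul (π / 4)).sub tendsto_TT
      simpa using this
    apply le_of_tendsto htend
    filter_upwards [Filter.eventually_ge_atTop t] with u hu
    exact hanti Set.self_mem_Ici hu hu

/-- Two-sided tail bounds for a non-standard Gaussian `X ~ N(μ, σ²)`, `σ > 0`:
for `x > μ` and `t = (x − μ)/σ`,
`√(2/π) e^{−t²/2}/(t + √(t²+4)) ≤ P(X > x) ≤ √(2/π) e^{−t²/2}/(t + √(t²+8/π))`. -/
theorem stmt9 (μ σ x : ℝ) (hσ : 0 < σ) (hx : μ < x) :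
    Real.sqrt (2 / π) * Real.exp (-(((x - μ) / σ) ^ 2) / 2) /
        ((x - μ) / σ + Real.sqrt (((x - μ) / σ) ^ 2 + 4)) ≤
      (gaussianReal μ ⟨σ ^ 2, sq_nonneg σ⟩ {y | x < y}).toReal ∧
    (gaussianReal μ ⟨σ ^ 2, sq_nonneg σ⟩ {y | x < y}).toReal ≤
      Real.sqrt (2 / π) * Real.exp (-(((x - μ) / σ) ^ 2) / 2) /
        ((x - μ) / σ + Real.sqrt (((x - μ) / σ) ^ 2 + 8 / π)) := by
  have hπ := pi_facts
  rw [gauss_reduction μ σ x hσ]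
  set t : ℝ := (x - μ) / σ with htdef
  have htpos : 0 < t := div_pos (by linarith) hσ
  have he : (0:ℝ) < Real.exp (-t ^ 2 / 2) := Real.exp_pos _
  set e : ℝ := Real.exp (-t ^ 2 / 2) with hedef
  clear_value t e

  have h2πpos : (0:ℝ) < Real.sqrt (2 * π) := Real.sqrt_pos.mpr (by positivity)
  have hkey : Real.sqrt (2 / π) * Real.sqrt (2 * π) = 2 := by
    rw [← Real.sqrt_mul (by positivity)]
    rw [show 2 / π * (2 * π) = 2 ^ 2 by field_simp]
    exact Real.sqrt_sq (by norm_num)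
  constructor
  · -- lower bound
    have hlb := lower_bound t
    rw [LL, ← hedef] at hlb
    set s : ℝ := Real.sqrt (t ^ 2 + 4) with hsdef
    have hs2 : s ^ 2 = t ^ 2 + 4 := Real.sq_sqrt (by positivity)
    have hspos : (0:ℝ) < s := Real.sqrt_pos.mpr (by positivity)
    clear_value s
    have heq : Real.sqrt (2 / π) * e / (t + s)
        = (Real.sqrt (2 * π))⁻¹ * (e * (s - t) / 2) := by
      have hts : (0:ℝ) < t + s := by positivity
      have h2 : Real.sqrt 2 ^ 2 = 2 := Real.sq_sqrt (by norm_num)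
      field_simp
      linear_combination 2 * hkey - hs2
    rw [heq]
    apply mul_le_mul_of_nonneg_left _ (by positivity)
    linarith
  · -- upper bound
    have hpos : (0:ℝ) < t ^ 2 + 8 / π := by positivity
    have hub := upper_bound t htpos.le
    rw [LL, ← hedef] at hub
    set s : ℝ := Real.sqrt (t ^ 2 + 8 / π) with hsdef
    have hs2 : s ^ 2 = t ^ 2 + 8 / π := Real.sq_sqrt hpos.le
    have hπs : π * s ^ 2 = π * t ^ 2 + 8 := by
      rw [hs2]; field_simp
    have hspos : (0:ℝ) < s := Real.sqrt_pos.mpr hpos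
    clear_value s
    have heq : Real.sqrt (2 / π) * e / (t + s)
        = (Real.sqrt (2 * π))⁻¹ * (π / 4 * (e * (s - t))) := by
      have hts : (0:ℝ) < t + s := by positivity
      have h2 : Real.sqrt 2 ^ 2 = 2 := Real.sq_sqrt (by norm_num)
      field_simp
      linear_combination 4 * hkey - hπs
    rw [heq]
    apply mul_le_mul_of_nonneg_left _ (by positivity)
    linarith
end

section
/- Let X ~ Gamma(α, β) in shape–rate parametrization (density β^α·x^{α−1}·e^{−βx}/Γ(α)), with α > 1, β > 0. Then for any x > (α−1)/β: β^{α−1}·x^{α−1}·e^{−βx}/Γ(α) ≤ P(X ≥ x) ≤ β^α·x^{α−1}·e^{−βx}/(Γ(α)·(β − (α−1)/x)). -/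
open MeasureTheory ProbabilityTheory

open Set Filter Topology in
lemma stmt11_aux_integrable {s b x : ℝ} (hs : -1 < s) (hb : 0 < b) (hx : 0 < x) :
    MeasureTheory.IntegrableOn (fun t : ℝ => t ^ s * Real.exp (-(b * t))) (Set.Ioi x) := by
  have h := integrableOn_rpow_mul_exp_neg_mul_rpow hs zero_lt_one hb
  have h2 : MeasureTheory.IntegrableOn (fun t : ℝ => t ^ s * Real.exp (-(b * t)))
      (Set.Ioi 0) := by
    refine h.congr_fun (fun t ht => ?_) measurableSet_Ioi
    dsimp only
    rw [Real.rpow_one, neg_mul]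
  exact h2.mono_set (Set.Ioi_subset_Ioi hx.le)

/-- Two-sided Mills-type bounds for the Gamma distribution (shape `α`, rate `β`):
for `α > 1`, `β > 0`, `x > (α−1)/β`,
`β^{α−1} x^{α−1} e^{−βx}/Γ(α) ≤ P(X ≥ x) ≤ β^α x^{α−1} e^{−βx}/(Γ(α)(β − (α−1)/x))`. -/
theorem stmt11 (α β x : ℝ) (hα : 1 < α) (hβ : 0 < β) (hx : (α - 1) / β < x) :
    β ^ (α - 1) * x ^ (α - 1) * Real.exp (-β * x) / Real.Gamma α ≤
      (gammaMeasure α β {y | x ≤ y}).toReal ∧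
    (gammaMeasure α β {y | x ≤ y}).toReal ≤
      β ^ α * x ^ (α - 1) * Real.exp (-β * x) /
        (Real.Gamma α * (β - (α - 1) / x)) := by
  have hα1 : (0:ℝ) < α - 1 := by linarith
  have hx0 : 0 < x := lt_of_le_of_lt (by positivity) hx
  have hΓ : 0 < Real.Gamma α := Real.Gamma_pos_of_pos (by linarith)
  have hden : 0 < β - (α - 1) / x := by
    rw [sub_pos, div_lt_iff₀ hx0]
    rw [div_lt_iff₀ hβ] at hx
    linarith
  set I : ℝ := ∫ t in Set.Ioi x, t ^ (α - 1) * Real.exp (-(β * t)) with hI_def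
  set J : ℝ := ∫ t in Set.Ioi x, t ^ (α - 2) * Real.exp (-(β * t)) with hJ_def
  have hIint : IntegrableOn (fun t : ℝ => t ^ (α - 1) * Real.exp (-(β * t))) (Set.Ioi x) :=
    stmt11_aux_integrable (by linarith) hβ hx0
  have hJint : IntegrableOn (fun t : ℝ => t ^ (α - 2) * Real.exp (-(β * t))) (Set.Ioi x) :=
    stmt11_aux_integrable (by linarith) hβ hx0
  -- FTC on (x, ∞)
  have hd : ∀ t ∈ Set.Ici x, HasDerivAt (fun t : ℝ => t ^ (α - 1) * Real.exp (-(β * t)))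
      ((α - 1) * (t ^ (α - 2) * Real.exp (-(β * t))) - β * (t ^ (α - 1) * Real.exp (-(β * t)))) t := by
    intro t ht
    have ht0 : t ≠ 0 := (lt_of_lt_of_le hx0 ht).ne'
    have h1 : HasDerivAt (fun t : ℝ => t ^ (α - 1)) ((α - 1) * t ^ (α - 1 - 1)) t :=
      Real.hasDerivAt_rpow_const (Or.inl ht0)
    have h2 : HasDerivAt (fun t : ℝ => Real.exp (-(β * t))) (-β * Real.exp (-(β * t))) t := by
      have h3 : HasDerivAt (fun t : ℝ => -(β * t)) (-β) t := by
        simpa [Pi.neg_def] using ((hasDerivAt_id t).const_mul β).neg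
      simpa [mul_comm] using h3.exp
    have := h1.fun_mul h2
    have he : α - 1 - 1 = α - 2 := by ring
    rw [he] at this
    refine this.congr_deriv ?_
    ring
  have htends : Filter.Tendsto (fun t : ℝ => t ^ (α - 1) * Real.exp (-(β * t)))
      Filter.atTop (nhds 0) := by
    simpa [neg_mul] using tendsto_rpow_mul_exp_neg_mul_atTop_nhds_zero (α - 1) β hβ
  have hf'int : IntegrableOn (fun t : ℝ =>
      (α - 1) * (t ^ (α - 2) * Real.exp (-(β * t))) - β * (t ^ (α - 1) * Real.exp (-(β * t))))
      (Set.Ioi x) := (hJint.const_mul _).sub (hIint.const_mul _)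
  have hFTC := integral_Ioi_of_hasDerivAt_of_tendsto' hd hf'int htends
  rw [integral_sub (hJint.const_mul _) (hIint.const_mul _), integral_const_mul,
    integral_const_mul] at hFTC
  have key : β * I - (α - 1) * J = x ^ (α - 1) * Real.exp (-(β * x)) := by
    rw [← hI_def, ← hJ_def] at hFTC
    linarith [hFTC]
  have hJ0 : 0 ≤ J := by
    apply setIntegral_nonneg measurableSet_Ioi
    intro t ht
    have := hx0.trans ht
    positivity
  have hI0 : 0 ≤ I := by
    apply setIntegral_nonneg measurableSet_Ioi
    intro t ht
    have := hx0.trans ht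
    positivity
  have hJI : J ≤ I / x := by
    rw [le_div_iff₀ hx0, mul_comm]
    calc x * J = ∫ t in Set.Ioi x, x * (t ^ (α - 2) * Real.exp (-(β * t))) := by
          rw [integral_const_mul]
      _ ≤ I := by
          apply setIntegral_mono_on (hJint.const_mul x) hIint measurableSet_Ioi
          intro t ht
          have htx : x < t := ht
          have ht0 : 0 < t := hx0.trans htx
          have heq : t ^ (α - 1) = t ^ (α - 2) * t := by
            have h21 : α - 2 + 1 = α - 1 := by ring
            rw [← h21, Real.rpow_add_one ht0.ne']
          rw [heq]
          have hE : 0 < Real.exp (-(β * t)) := Real.exp_pos _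
          have hp : 0 < t ^ (α - 2) := Real.rpow_pos_of_pos ht0 _
          nlinarith [mul_pos hp hE]
  -- identify the measure with the integral
  have hmeas : (gammaMeasure α β {y | x ≤ y}).toReal = β ^ α / Real.Gamma α * I := by
    have hset : {y : ℝ | x ≤ y} = Set.Ici x := rfl
    rw [hset, gammaMeasure, withDensity_apply _ measurableSet_Ici]
    have h1 : ∫ t in Set.Ici x, gammaPDFReal α β t
        = (∫⁻ t in Set.Ici x, gammaPDF α β t).toReal := by
      rw [integral_eq_lintegral_of_nonneg_ae
        (ae_of_all _ fun t => gammaPDFReal_nonneg (by linarith) hβ t)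
        ((measurable_gammaPDFReal α β).aestronglyMeasurable.restrict)]
      rfl
    rw [← h1, integral_Ici_eq_integral_Ioi]
    have h2 : ∀ t ∈ Set.Ioi x, gammaPDFReal α β t
        = β ^ α / Real.Gamma α * (t ^ (α - 1) * Real.exp (-(β * t))) := by
      intro t ht
      have ht0 : (0:ℝ) ≤ t := (hx0.trans ht).le
      rw [gammaPDFReal, if_pos ht0, mul_assoc]
    rw [setIntegral_congr_fun measurableSet_Ioi h2, integral_const_mul]
  have hβα : β ^ α = β ^ (α - 1) * β := by
    have h : α - 1 + 1 = α := by ring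
    rw [← h, Real.rpow_add_one hβ.ne', h]
  constructor
  · -- lower bound
    rw [hmeas, neg_mul]
    have hI_lb : x ^ (α - 1) * Real.exp (-(β * x)) / β ≤ I := by
      rw [div_le_iff₀ hβ]
      nlinarith
    calc β ^ (α - 1) * x ^ (α - 1) * Real.exp (-(β * x)) / Real.Gamma α
        = β ^ α / Real.Gamma α * (x ^ (α - 1) * Real.exp (-(β * x)) / β) := by
          rw [hβα]; field_simp
      _ ≤ β ^ α / Real.Gamma α * I :=
          mul_le_mul_of_nonneg_left hI_lb (by positivity)
  · -- upper bound
    rw [hmeas, neg_mul]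
    have hI_ub : I ≤ x ^ (α - 1) * Real.exp (-(β * x)) / (β - (α - 1) / x) := by
      rw [le_div_iff₀ hden]
      have h1 : (α - 1) * J ≤ (α - 1) * (I / x) :=
        mul_le_mul_of_nonneg_left hJI hα1.le
      have expand : I * (β - (α - 1) / x) = β * I - (α - 1) * (I / x) := by ring
      rw [expand]
      linarith
    calc β ^ α / Real.Gamma α * I
        ≤ β ^ α / Real.Gamma α * (x ^ (α - 1) * Real.exp (-(β * x)) / (β - (α - 1) / x)) :=
          mul_le_mul_of_nonneg_left hI_ub (by positivity)
      _ = β ^ α * x ^ (α - 1) * Real.exp (-(β * x)) /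
          (Real.Gamma α * (β - (α - 1) / x)) := by
          field_simp
end
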